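/- Let W_1 = T_0 e_0 + T_1 e_1 be the generic element of weight one in the shuffle algebra over ℚ[T_0, T_1]. Then x = (1 - W_1)^{-1} = ∑_{n≥0} W_1^n satisfies, and is up to the choice x_0 = 1 the unique power series solution with nonzero constant term to, the equation x ⧢ W_1 = x · W_1 · x, where ⧢ is the shuffle product and · is concatenation. -/

import Mathlib

open MvPolynomial

/-- The subword of `w` given by the positions in `S` (taken in increasing order). -/
def extract (w : List (Fin 2)) (S : Finset ℕ) : List (Fin 2) :=
  ((w.zipIdx.map Prod.swap).filter (fun q => q.1 ∈ S)).map Prod.snd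

/-- Shuffle product of noncommutative series (coefficientwise: sum over all
ways of splitting the positions of `w` into two complementary subwords). -/
def shMul {R : Type*} [CommSemiring R] (u v : List (Fin 2) → R) : List (Fin 2) → R :=
  fun w => ∑ S ∈ (Finset.range w.length).powerset,
    u (extract w S) * v (extract w ((Finset.range w.length) \ S))

/-- Concatenation product of noncommutative series. -/
def convMul {R : Type*} [Semiring R] (u v : List (Fin 2) → R) : List (Fin 2) → R :=
  fun w => ∑ i ∈ Finset.range (w.length + 1), u (w.take i) * v (w.drop i)

/-- The generic weight-one element `W₁ = T₀ e₀ + T₁ e₁` over `ℚ[T₀,T₁]`. -/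
noncomputable def W1 : List (Fin 2) → MvPolynomial (Fin 2) ℚ :=
  fun w => if w = [(0 : Fin 2)] then X 0 else if w = [(1 : Fin 2)] then X 1 else 0

/-- The geometric series `(1 - W₁)⁻¹ = ∑_{n≥0} W₁ⁿ`, whose coefficient at a word
`w` is `T₀^{#e₀(w)} · T₁^{#e₁(w)}`. -/
noncomputable def geomW1 : List (Fin 2) → MvPolynomial (Fin 2) ℚ :=
  fun w => X 0 ^ (w.count (0 : Fin 2)) * X 1 ^ (w.count (1 : Fin 2))



/-- generalized extract starting at index `k`. -/
def extrF (k : ℕ) (w : List (Fin 2)) (S : Finset ℕ) : List (Fin 2) :=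
  (((w.zipIdx k).map Prod.swap).filter (fun q => q.1 ∈ S)).map Prod.snd

lemma extract_eq (w : List (Fin 2)) (S : Finset ℕ) : extract w S = extrF 0 w S := by
  simp [extract, extrF]

@[simp] lemma extrF_nil (k : ℕ) (S : Finset ℕ) : extrF k [] S = [] := rfl

lemma extrF_cons (k : ℕ) (a : Fin 2) (w : List (Fin 2)) (S : Finset ℕ) :
    extrF k (a :: w) S = (if k ∈ S then [a] else []) ++ extrF (k+1) w S := by
  simp only [extrF, List.zipIdx_cons, List.map_cons, List.filter_cons]
  by_cases h : k ∈ S <;> simp [h]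

lemma extrF_empty (k : ℕ) (w : List (Fin 2)) (S : Finset ℕ)
    (h : ∀ j, k ≤ j → j < k + w.length → j ∉ S) : extrF k w S = [] := by
  induction w generalizing k with
  | nil => rfl
  | cons a w ih =>
    rw [extrF_cons, if_neg (h k le_rfl (by simp)), List.nil_append]
    exact ih (k+1) fun j h1 h2 => h j (by omega) (by simp at h2 ⊢; omega)

lemma extrF_full (k : ℕ) (w : List (Fin 2)) (S : Finset ℕ)
    (h : ∀ j, k ≤ j → j < k + w.length → j ∈ S) : extrF k w S = w := by
  induction w generalizing k with
  | nil => rfl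
  | cons a w ih =>
    rw [extrF_cons, if_pos (h k le_rfl (by simp))]
    simp only [List.singleton_append, List.cons.injEq, true_and]
    exact ih (k+1) fun j h1 h2 => h j (by omega) (by simp at h2 ⊢; omega)

lemma extrF_erase (k i : ℕ) (w : List (Fin 2)) (S : Finset ℕ)
    (h1 : k ≤ i) (h2 : i < k + w.length)
    (h : ∀ j, k ≤ j → j < k + w.length → (j ∈ S ↔ j ≠ i)) :
    extrF k w S = w.eraseIdx (i - k) := by
  induction w generalizing k with
  | nil => simp at h2; omega
  | cons a w ih =>
    rcases eq_or_ne i k with rfl | hne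
    · rw [extrF_cons, if_neg (by simp [h i le_rfl (by simp)]), List.nil_append,
        Nat.sub_self, List.eraseIdx_zero, List.tail_cons]
      exact extrF_full _ _ _ fun j hj1 hj2 =>
        (h j (by omega) (by simp at hj2 ⊢; omega)).2 (by omega)
    · rw [extrF_cons, if_pos ((h k le_rfl (by simp)).2 (Ne.symm hne)), List.singleton_append]
      have hik : i - k = (i - (k+1)) + 1 := by omega
      rw [hik, List.eraseIdx_cons_succ]
      congr 1
      exact ih (k+1) (by omega) (by simp at h2 ⊢; omega)
        (fun j hj1 hj2 => h j (by omega) (by simp at hj2 ⊢; omega))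

lemma extrF_single (k i : ℕ) (w : List (Fin 2)) (S : Finset ℕ)
    (h1 : k ≤ i) (h2 : i < k + w.length)
    (h : ∀ j, k ≤ j → j < k + w.length → (j ∈ S ↔ j = i)) :
    extrF k w S = [w.getD (i - k) 0] := by
  induction w generalizing k with
  | nil => simp at h2; omega
  | cons a w ih =>
    rcases eq_or_ne i k with rfl | hne
    · rw [extrF_cons, if_pos ((h i le_rfl (by simp)).2 rfl), List.singleton_append,
        Nat.sub_self, List.getD_cons_zero]
      rw [extrF_empty _ _ _ fun j hj1 hj2 hjS => by
        have := (h j (by omega) (by simp at hj2 ⊢; omega)).1 hjS; omega]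
    · rw [extrF_cons, if_neg (by
        intro hk
        exact hne ((h k le_rfl (by simp)).1 hk).symm), List.nil_append]
      have hik : i - k = (i - (k+1)) + 1 := by omega
      rw [hik, List.getD_cons_succ]
      exact ih (k+1) (by omega) (by simp at h2 ⊢; omega)
        (fun j hj1 hj2 => h j (by omega) (by simp at hj2 ⊢; omega))

lemma extrF_length (k : ℕ) (w : List (Fin 2)) (S : Finset ℕ) :
    (extrF k w S).length = ((Finset.Ico k (k + w.length)).filter (fun j => j ∈ S)).card := by
  induction w generalizing k with
  | nil => simp
  | cons a w ih =>
    rw [extrF_cons, List.length_append, ih (k+1)]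
    rw [Finset.card_filter, Finset.card_filter,
      Finset.sum_eq_sum_Ico_succ_bot (by simp : k < k + (a :: w).length)]
    simp only [List.length_cons]
    have : k + (w.length + 1) = (k + 1) + w.length := by omega
    rw [this]
    by_cases h : k ∈ S <;> simp [h]

lemma extract_length (w : List (Fin 2)) (S : Finset ℕ) (hS : S ⊆ Finset.range w.length) :
    (extract w S).length = S.card := by
  rw [extract_eq, extrF_length]
  congr 1
  ext j
  simp only [Finset.mem_filter, Finset.mem_Ico, Nat.zero_add, Nat.zero_le, true_and]
  exact ⟨fun h => h.2, fun h => ⟨by simpa using hS h, h⟩⟩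

lemma extract_sdiff_singleton (w : List (Fin 2)) (i : ℕ) (hi : i < w.length) :
    extract w (Finset.range w.length \ {i}) = w.eraseIdx i := by
  rw [extract_eq]
  have := extrF_erase 0 i w (Finset.range w.length \ {i}) (Nat.zero_le _) (by omega)
    (fun j h1 h2 => by simp [Finset.mem_sdiff, Finset.mem_range]; omega)
  simpa using this

lemma extract_singleton (w : List (Fin 2)) (i : ℕ) (hi : i < w.length) :
    extract w ({i} : Finset ℕ) = [w.getD i 0] := by
  rw [extract_eq]
  have := extrF_single 0 i w {i} (Nat.zero_le _) (by omega)
    (fun j h1 h2 => by simp)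
  simpa using this


lemma W1_single (a : Fin 2) : W1 [a] = X a := by
  fin_cases a <;> simp [W1]

lemma W1_ne_one (l : List (Fin 2)) (h : l.length ≠ 1) : W1 l = 0 := by
  rw [W1]
  split_ifs with h1 h2
  · exact absurd (by rw [h1]; rfl) h
  · exact absurd (by rw [h2]; rfl) h
  · rfl

lemma shMul_W1 {y : List (Fin 2) → MvPolynomial (Fin 2) ℚ} (w : List (Fin 2)) :
    shMul y W1 w = ∑ i ∈ Finset.range w.length, y (w.eraseIdx i) * X (w.getD i 0) := by
  classical
  set n := w.length with hn
  have hinj : ∀ x ∈ Finset.range n, ∀ z ∈ Finset.range n,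
      Finset.range n \ {x} = Finset.range n \ {z} → x = z := by
    intro x hx z hz h
    have hx' : ({x} : Finset ℕ) ⊆ Finset.range n := by simpa using hx
    have hz' : ({z} : Finset ℕ) ⊆ Finset.range n := by simpa using hz
    have := Finset.sdiff_sdiff_eq_self hx'
    rw [h, Finset.sdiff_sdiff_eq_self hz'] at this
    simpa [Finset.singleton_inj] using this.symm
  have hsub : (Finset.range n).image (fun i => Finset.range n \ {i}) ⊆ (Finset.range n).powerset := by
    intro S hS
    simp only [Finset.mem_image] at hS
    obtain ⟨i, _, rfl⟩ := hS
    simp [Finset.sdiff_subset]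
  rw [shMul, ← Finset.sum_subset hsub]
  · rw [Finset.sum_image hinj]
    apply Finset.sum_congr rfl
    intro i hi
    rw [Finset.mem_range] at hi
    have h1 : ({i} : Finset ℕ) ⊆ Finset.range n := by simpa using hi
    rw [Finset.sdiff_sdiff_eq_self h1, extract_sdiff_singleton w i hi, extract_singleton w i hi,
      W1_single]
  · intro S hS hSni
    rw [Finset.mem_powerset] at hS
    by_contra hne
    have hW : W1 (extract w (Finset.range n \ S)) ≠ 0 := fun h => hne (by rw [h, mul_zero])
    have hlen : (extract w (Finset.range n \ S)).length = (Finset.range n \ S).card :=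
      extract_length w _ (Finset.sdiff_subset)
    have hcard : (Finset.range n \ S).card = 1 := by
      by_contra hc
      exact hW (W1_ne_one _ (by rw [hlen]; exact hc))
    obtain ⟨i, hi⟩ := Finset.card_eq_one.mp hcard
    have hiS : i ∈ Finset.range n := by
      have : i ∈ Finset.range n \ S := by rw [hi]; exact Finset.mem_singleton_self i
      exact (Finset.mem_sdiff.mp this).1
    apply hSni
    rw [Finset.mem_image]
    refine ⟨i, hiS, ?_⟩
    rw [← hi, Finset.sdiff_sdiff_eq_self hS]

lemma convMul_W1_nil {y : List (Fin 2) → MvPolynomial (Fin 2) ℚ} : convMul y W1 [] = 0 := by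
  simp [convMul, W1]

lemma convMul_W1 {y : List (Fin 2) → MvPolynomial (Fin 2) ℚ} (p : List (Fin 2)) (m : ℕ)
    (hp : p.length = m + 1) :
    convMul y W1 p = y (p.take m) * X (p.getD m 0) := by
  rw [convMul, hp]
  rw [Finset.sum_eq_single_of_mem m (by simp [Finset.mem_range])]
  · congr 1
    have hm : m < p.length := by omega
    rw [List.drop_eq_getElem_cons hm, show m + 1 = p.length from hp.symm, List.drop_length,
      List.getD_eq_getElem _ _ hm, W1_single]
  · intro j hj hjm
    rw [Finset.mem_range] at hj
    have : (p.drop j).length ≠ 1 := by rw [List.length_drop, hp]; omega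
    rw [W1_ne_one _ this, mul_zero]

lemma convMul_convMul_W1 {y z : List (Fin 2) → MvPolynomial (Fin 2) ℚ} (w : List (Fin 2)) :
    convMul (convMul y W1) z w =
      ∑ i ∈ Finset.range w.length, y (w.take i) * X (w.getD i 0) * z (w.drop (i+1)) := by
  rw [convMul, Finset.sum_range_succ']
  rw [List.take_zero, convMul_W1_nil, zero_mul, add_zero]
  apply Finset.sum_congr rfl
  intro j hj
  rw [Finset.mem_range] at hj
  have hlen : (w.take (j+1)).length = j + 1 := by
    rw [List.length_take]; omega
  rw [convMul_W1 _ j hlen]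
  have h1 : (w.take (j+1)).take j = w.take j := by
    rw [List.take_take]; congr 1; omega
  have h2 : (w.take (j+1)).getD j 0 = w.getD j 0 := by
    rw [List.getD_eq_getElem _ _ (by omega : j < (w.take (j+1)).length), List.getElem_take,
      List.getD_eq_getElem _ _ (by omega : j < w.length)]
  rw [h1, h2]


lemma fin2_ne (a b : Fin 2) (h : a ≠ b) : a = 1 - b := by revert a b; decide

lemma core (t : Fin 2 → ℚ) (b : Fin 2) (hb : t b ≠ 0) :
    ∀ (k : ℕ) (c : ℕ → ℚ), (∀ j, 0 < c j) → ∀ (h : List (Fin 2) → ℚ),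
      (∀ v : List (Fin 2), v.length = k + 1 →
        ∑ j ∈ Finset.range (k + 1), c j * (t (v.getD j 0) * h (v.eraseIdx j)) = 0) →
      ∀ u : List (Fin 2), u.length = k → h u = 0 := by
  intro k
  induction k with
  | zero =>
    intro c hc h H u hu
    have h1 := H [b] rfl
    simp only [zero_add, Finset.sum_range_one, List.getD_cons_zero, List.eraseIdx_cons_zero] at h1
    have : h [] = 0 := by
      have := mul_eq_zero.mp h1
      rcases this with h' | h'
      · exact absurd h' (hc 0).ne'
      · rcases mul_eq_zero.mp h' with h'' | h''
        · exact absurd h'' hb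
        · exact h''
    rwa [List.length_eq_zero_iff.mp hu]
  | succ k IH =>
    intro c hc h H u hu
    -- key: appended-letter equation
    have key : ∀ (a : Fin 2) (v : List (Fin 2)), v.length = k + 1 →
        ∑ j ∈ Finset.range (k + 1), c j * (t (v.getD j 0) * h (v.eraseIdx j ++ [a]))
          + c (k+1) * (t a * h v) = 0 := by
      intro a v hv
      have h1 := H (v ++ [a]) (by simp [hv])
      rw [Finset.sum_range_succ] at h1
      have e1 : ∀ j ∈ Finset.range (k+1),
          c j * (t ((v ++ [a]).getD j 0) * h ((v ++ [a]).eraseIdx j))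
            = c j * (t (v.getD j 0) * h (v.eraseIdx j ++ [a])) := by
        intro j hj
        rw [Finset.mem_range] at hj
        rw [List.getD_append _ _ _ _ (by omega), List.eraseIdx_append_of_lt_length (by omega)]
      rw [Finset.sum_congr rfl e1] at h1
      have e2 : (v ++ [a]).getD (k+1) 0 = a := by
        rw [List.getD_eq_getElem _ _ (by simp [hv])]
        exact List.getElem_concat_length (by omega) _
      have e3 : (v ++ [a]).eraseIdx (k+1) = v := by
        rw [List.eraseIdx_append_of_length_le (by omega), show k + 1 - v.length = 0 by omega]
        simp
      rw [e2, e3] at h1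
      exact h1
    -- last-letter proportionality
    set g : List (Fin 2) → ℚ := fun u => t (1 - b) * h (u ++ [b]) - t b * h (u ++ [1 - b])
      with hg_def
    have hg : ∀ u : List (Fin 2), u.length = k → g u = 0 := by
      apply IH c hc g
      intro v hv
      have h1 := key b v hv
      have h2 := key (1 - b) v hv
      have expand : ∑ j ∈ Finset.range (k+1), c j * (t (v.getD j 0) * g (v.eraseIdx j))
          = t (1-b) * (∑ j ∈ Finset.range (k+1), c j * (t (v.getD j 0) * h (v.eraseIdx j ++ [b])))
            - t b * (∑ j ∈ Finset.range (k+1), c j * (t (v.getD j 0) * h (v.eraseIdx j ++ [1-b]))) := by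
        rw [Finset.mul_sum, Finset.mul_sum, ← Finset.sum_sub_distrib]
        apply Finset.sum_congr rfl
        intro j hj
        simp only [hg_def]
        ring
      rw [expand]
      linear_combination t (1-b) * h1 - t b * h2
    set K : List (Fin 2) → ℚ := fun u => (t b)⁻¹ * h (u ++ [b]) with hK_def
    have hC : ∀ (a : Fin 2) (u : List (Fin 2)), u.length = k → h (u ++ [a]) = t a * K u := by
      intro a u hu'
      by_cases hab : a = b
      · subst hab
        simp only [hK_def]
        field_simp
      · rw [fin2_ne a b hab]
        have := hg u hu'
        simp only [hg_def] at this
        simp only [hK_def]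
        have h2 : t (1-b) * h (u ++ [b]) = t b * h (u ++ [1-b]) := by linarith
        field_simp
        linarith [h2]
    -- decompose any (k+1)-length word
    have hdec : ∀ v : List (Fin 2), v.length = k + 1 →
        h v = t (v.getD k 0) * K (v.eraseIdx k) := by
      intro v hv
      have hvne : v ≠ [] := by intro h'; rw [h'] at hv; simp at hv
      have hsplit : v.dropLast ++ [v.getLast hvne] = v := List.dropLast_append_getLast hvne
      have hdl : v.dropLast.length = k := by rw [List.length_dropLast, hv]; omega
      have e1 : v.getLast hvne = v.getD k 0 := by
        rw [List.getLast_eq_getElem, List.getD_eq_getElem _ _ (by omega)]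
        congr 1
        omega
      have e2 : v.dropLast = v.eraseIdx k := by
        rw [List.dropLast_eq_take, List.eraseIdx_eq_take_drop_succ,
          show k + 1 = v.length from hv.symm, List.drop_length, List.append_nil, hv]
        norm_num
      calc h v = h (v.dropLast ++ [v.getLast hvne]) := by rw [hsplit]
        _ = t (v.getLast hvne) * K v.dropLast := hC _ _ hdl
        _ = t (v.getD k 0) * K (v.eraseIdx k) := by rw [e1, e2]
    -- condition for K with merged weights
    set c' : ℕ → ℚ := fun j => if j = k then c k + c (k+1) else c j with hc'_def
    have hc' : ∀ j, 0 < c' j := by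
      intro j
      simp only [hc'_def]
      split_ifs
      · exact add_pos (hc k) (hc (k+1))
      · exact hc j
    have hK0 : ∀ u : List (Fin 2), u.length = k → K u = 0 := by
      apply IH c' hc' K
      intro v hv
      have h1 := key b v hv
      have e1 : ∀ j ∈ Finset.range (k+1),
          c j * (t (v.getD j 0) * h (v.eraseIdx j ++ [b]))
            = c j * (t b * (t (v.getD j 0) * K (v.eraseIdx j))) := by
        intro j hj
        rw [Finset.mem_range] at hj
        have : (v.eraseIdx j).length = k := by
          rw [List.length_eraseIdx, if_pos (by omega)]
          omega
        rw [hC b _ this]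
        ring
      rw [Finset.sum_congr rfl e1, hdec v hv, Finset.sum_range_succ] at h1
      have e2 : ∀ j ∈ Finset.range k,
          c' j * (t (v.getD j 0) * K (v.eraseIdx j)) = c j * (t (v.getD j 0) * K (v.eraseIdx j)) := by
        intro j hj
        rw [Finset.mem_range] at hj
        rw [hc'_def]
        simp only [if_neg (by omega : j ≠ k)]
      have hck : c' k = c k + c (k+1) := by rw [hc'_def]; simp
      apply mul_left_cancel₀ hb
      rw [mul_zero, Finset.sum_range_succ, Finset.sum_congr rfl e2, hck, mul_add, Finset.mul_sum]
      have e4 : ∀ j ∈ Finset.range k,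
          t b * (c j * (t (v.getD j 0) * K (v.eraseIdx j)))
            = c j * (t b * (t (v.getD j 0) * K (v.eraseIdx j))) := by
        intro j hj; ring
      rw [Finset.sum_congr rfl e4]
      linear_combination h1
    -- conclude
    have hune : u ≠ [] := by intro h'; rw [h'] at hu; simp at hu
    have := hdec u hu
    rw [this, hK0 _ (by rw [List.length_eraseIdx, if_pos (by omega)]; omega), mul_zero]


lemma pz (p : MvPolynomial (Fin 2) ℚ) (hp : ∀ t : Fin 2 → ℚ, t ≠ 0 → eval t p = 0) :
    p = 0 := by
  have hall : ∀ x : Fin 2 → ℚ, eval x p = 0 := by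
    intro x
    set φ : MvPolynomial (Fin 2) ℚ →+* Polynomial ℚ :=
      eval₂Hom Polynomial.C (fun i => Polynomial.C (x i) + Polynomial.X) with hφ
    have hev : ∀ s : ℚ, (φ p).eval s = eval (fun i => x i + s) p := by
      intro s
      have hcomp : (Polynomial.evalRingHom s).comp φ
          = (eval (fun i => x i + s) : MvPolynomial (Fin 2) ℚ →+* ℚ) := by
        apply MvPolynomial.ringHom_ext
        · intro r; simp [hφ]
        · intro i; simp [hφ]
      calc (φ p).eval s = ((Polynomial.evalRingHom s).comp φ) p := rfl
        _ = eval (fun i => x i + s) p := by rw [hcomp]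
    have hφ0 : φ p = 0 := by
      apply Polynomial.eq_zero_of_infinite_isRoot
      apply Set.Infinite.mono (s := ({-x 0, -x 1} : Set ℚ)ᶜ)
      · intro s hs
        simp only [Set.mem_compl_iff, Set.mem_insert_iff, Set.mem_singleton_iff, not_or] at hs
        have hne : (fun i => x i + s) ≠ (0 : Fin 2 → ℚ) := by
          intro hzero
          have h0 : x 0 + s = 0 := congrFun hzero 0
          exact hs.1 (by linarith)
        show (φ p).IsRoot s
        rw [Polynomial.IsRoot, hev s, hp _ hne]
      · exact Set.Finite.infinite_compl (by simp)
    have := hev 0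
    rw [hφ0] at this
    simp only [Polynomial.eval_zero] at this
    rw [show (fun i => x i + 0) = x by funext i; ring] at this
    exact this.symm
  have : p = (0 : MvPolynomial (Fin 2) ℚ) := MvPolynomial.funext (by simpa using hall)
  exact this


lemma geom_append (u v : List (Fin 2)) : geomW1 (u ++ v) = geomW1 u * geomW1 v := by
  simp only [geomW1, List.count_append, pow_add]
  ring

lemma split3 {M : Type*} [AddCommMonoid M] (f : ℕ → M) (m : ℕ) :
    ∑ i ∈ Finset.range (m+3), f i = f 0 + (∑ j ∈ Finset.range (m+1), f (j+1)) + f (m+2) := by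
  rw [show m+3 = (m+2)+1 from rfl, Finset.sum_range_succ,
    show m+2 = (m+1)+1 from rfl, Finset.sum_range_succ']
  abel

/-- `(1 - W₁)⁻¹` satisfies `x ⧢ W₁ = x · W₁ · x`, and any solution of this
equation with constant coefficient `1` is the geometric series of its
weight-one part. -/
theorem stmt_8 :
    shMul geomW1 W1 = convMul (convMul geomW1 W1) geomW1 ∧
      ∀ y : List (Fin 2) → MvPolynomial (Fin 2) ℚ,
        y [] = 1 → shMul y W1 = convMul (convMul y W1) y →
          ∀ w : List (Fin 2), y w = (w.map (fun a => y [a])).prod := by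
  constructor
  · funext w
    rw [shMul_W1, convMul_convMul_W1]
    apply Finset.sum_congr rfl
    intro i hi
    rw [List.eraseIdx_eq_take_drop_succ, geom_append]
    ring
  · intro y hy0 heq
    have CE : ∀ w : List (Fin 2),
        ∑ i ∈ Finset.range w.length, y (w.eraseIdx i) * X (w.getD i 0)
          = ∑ i ∈ Finset.range w.length, y (w.take i) * X (w.getD i 0) * y (w.drop (i+1)) := by
      intro w
      have := congrFun heq w
      rwa [shMul_W1, convMul_convMul_W1] at this
    set P : List (Fin 2) → MvPolynomial (Fin 2) ℚ := fun u => (u.map (fun a => y [a])).prod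
      with hP_def
    have hPapp : ∀ u v : List (Fin 2), P (u ++ v) = P u * P v := by
      intro u v; simp [hP_def]
    suffices H : ∀ (n : ℕ) (w : List (Fin 2)), w.length = n → y w = P w by
      intro w; exact H w.length w rfl
    intro n
    induction n using Nat.strong_induction_on with
    | _ n IH =>
      match n with
      | 0 =>
        intro w hw
        rw [List.length_eq_zero_iff.mp hw, hy0]
        simp [hP_def]
      | 1 =>
        intro w hw
        obtain ⟨a, rfl⟩ := List.length_eq_one_iff.mp hw
        simp [hP_def]
      | (m+2) =>
        intro w hw
        have hd : ∀ u : List (Fin 2), u.length < m + 2 → y u = P u :=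
          fun u hu => IH u.length hu u rfl
        -- the homogeneous "middle deletion" equation
        have hmid : ∀ v : List (Fin 2), v.length = m + 3 →
            ∑ j ∈ Finset.range (m+1),
              (y (v.eraseIdx (j+1)) - P (v.eraseIdx (j+1))) * X (v.getD (j+1) 0) = 0 := by
          intro v hv
          have hce := CE v
          rw [hv] at hce
          rw [split3 (fun i => y (v.eraseIdx i) * X (v.getD i 0)) m,
            split3 (fun i => y (v.take i) * X (v.getD i 0) * y (v.drop (i+1))) m] at hce
          have eA0 : y (v.eraseIdx 0) * X (v.getD 0 0)
              = y (v.take 0) * X (v.getD 0 0) * y (v.drop (0+1)) := by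
            rw [List.eraseIdx_zero, List.take_zero, show (0:ℕ)+1 = 1 from rfl, List.drop_one, hy0]
            ring
          have eTop : y (v.eraseIdx (m+2)) * X (v.getD (m+2) 0)
              = y (v.take (m+2)) * X (v.getD (m+2) 0) * y (v.drop (m+2+1)) := by
            have h1 : v.eraseIdx (m+2) = v.take (m+2) := by
              rw [List.eraseIdx_eq_take_drop_succ, show m+2+1 = v.length from hv.symm,
                List.drop_length, List.append_nil]
            have h2 : v.drop (m+2+1) = [] := by
              rw [show m+2+1 = v.length from hv.symm, List.drop_length]
            rw [h1, h2, hy0]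
            ring
          have hmidEq : ∑ j ∈ Finset.range (m+1), y (v.eraseIdx (j+1)) * X (v.getD (j+1) 0)
              = ∑ j ∈ Finset.range (m+1),
                  y (v.take (j+1)) * X (v.getD (j+1) 0) * y (v.drop (j+1+1)) := by
            linear_combination hce - eA0 - eTop
          have hPB : ∑ j ∈ Finset.range (m+1),
                y (v.take (j+1)) * X (v.getD (j+1) 0) * y (v.drop (j+1+1))
              = ∑ j ∈ Finset.range (m+1), P (v.eraseIdx (j+1)) * X (v.getD (j+1) 0) := by
            apply Finset.sum_congr rfl
            intro j hj
            rw [Finset.mem_range] at hj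
            rw [hd (v.take (j+1)) (by rw [List.length_take]; omega),
              hd (v.drop (j+1+1)) (by rw [List.length_drop]; omega),
              List.eraseIdx_eq_take_drop_succ, hPapp]
            ring
          calc ∑ j ∈ Finset.range (m+1),
                (y (v.eraseIdx (j+1)) - P (v.eraseIdx (j+1))) * X (v.getD (j+1) 0)
              = (∑ j ∈ Finset.range (m+1), y (v.eraseIdx (j+1)) * X (v.getD (j+1) 0))
                - ∑ j ∈ Finset.range (m+1), P (v.eraseIdx (j+1)) * X (v.getD (j+1) 0) := by
                rw [← Finset.sum_sub_distrib]
                exact Finset.sum_congr rfl fun j hj => by ring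
            _ = 0 := by rw [hmidEq, hPB, sub_self]
        -- decompose w = a :: (mdl ++ [z])
        rcases w with _ | ⟨a, s⟩
        · simp at hw
        have hs : s.length = m + 1 := by simpa using hw
        have hsne : s ≠ [] := by intro h; rw [h] at hs; simp at hs
        obtain ⟨mdl, z, hsdec, hmdlLen⟩ :
            ∃ (mdl : List (Fin 2)) (z : Fin 2), s = mdl ++ [z] ∧ mdl.length = m :=
          ⟨s.dropLast, s.getLast hsne, (List.dropLast_append_getLast hsne).symm,
            by rw [List.length_dropLast, hs]; omega⟩
        subst hsdec
        have hDzero : y (a :: (mdl ++ [z])) - P (a :: (mdl ++ [z])) = 0 := by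
          apply pz
          intro t ht
          obtain ⟨b, hbne⟩ : ∃ b, t b ≠ 0 := by
            by_contra hcon
            push_neg at hcon
            exact ht (funext hcon)
          set hfun : List (Fin 2) → ℚ :=
            fun u => eval t (y (a :: (u ++ [z])) - P (a :: (u ++ [z]))) with hfun_def
          have hcond : ∀ v : List (Fin 2), v.length = m + 1 →
              ∑ j ∈ Finset.range (m + 1),
                (fun _ : ℕ => (1:ℚ)) j * (t (v.getD j 0) * hfun (v.eraseIdx j)) = 0 := by
            intro v hvlen
            have hV := hmid (a :: (v ++ [z])) (by
              simp only [List.length_cons, List.length_append, List.length_nil, List.length_singleton, hvlen])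
            have e : ∀ j ∈ Finset.range (m+1),
                (y ((a :: (v ++ [z])).eraseIdx (j+1)) - P ((a :: (v ++ [z])).eraseIdx (j+1)))
                    * X ((a :: (v ++ [z])).getD (j+1) 0)
                  = (y (a :: (v.eraseIdx j ++ [z])) - P (a :: (v.eraseIdx j ++ [z])))
                    * X (v.getD j 0) := by
              intro j hj
              rw [Finset.mem_range] at hj
              rw [List.eraseIdx_cons_succ, List.eraseIdx_append_of_lt_length (by omega),
                List.getD_cons_succ, List.getD_append _ _ _ _ (by omega)]
            rw [Finset.sum_congr rfl e] at hV
            have hV2 := congrArg (eval t) hV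
            rw [map_sum, map_zero] at hV2
            rw [← hV2]
            apply Finset.sum_congr rfl
            intro j hj
            rw [map_mul, eval_X]
            simp only [hfun_def]
            ring
          have := core t b hbne m (fun _ => (1:ℚ)) (fun _ => one_pos) hfun hcond mdl hmdlLen
          simpa [hfun_def] using this
        exact sub_eq_zero.mp hDzero
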